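/- For every n ≥ 1, the vertical-projection map sending (i,j) ↦ (0,j), which sends each vertical edge (i,j)–(i,j+1) of X_n to the edge (0,j)–(0,j+1) of Y_n and collapses each horizontal edge (i,j)–(i+1,j) of X_n to the single vertex (0,j), is a coarse f(n)-wiring of X_n into Y_n with volume exactly 2^{2^{2n}}·f(n) + 1. -/

import Mathlib

open SimpleGraph

/-- A wiring of `G` into `H`: a map on vertices together with, for each edge
(given by an ordered adjacent pair, compatibly with reversal), a walk in `H`
joining the images of the endpoints. -/
structure Wiring {V : Type*} {W : Type*} (G : SimpleGraph V) (H : SimpleGraph W) where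
  toFun : V → W
  walk : ∀ u v : V, G.Adj u v → H.Walk (toFun u) (toFun v)
  walk_symm : ∀ (u v : V) (h : G.Adj u v), walk v u (G.adj_symm h) = (walk u v h).reverse

namespace Wiring

variable {V : Type*} {W : Type*} {G : SimpleGraph V} {H : SimpleGraph W}

/-- A wiring is a coarse `k`-wiring if the vertex map is at most `k`-to-one and
every edge of `H` lies on at most `k` of the chosen walks.  (Since walks are
indexed by *ordered* adjacent pairs, with the walk of `(v,u)` the reverse of the
walk of `(u,v)`, each edge of `G` is counted twice; hence the bound `2 * k`.) -/
def IsCoarse (Wr : Wiring G H) (k : ℕ) : Prop :=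
  (∀ w : W, {v : V | Wr.toFun v = w}.ncard ≤ k) ∧
  (∀ e : Sym2 W, e ∈ H.edgeSet →
    {p : V × V | ∃ h : G.Adj p.1 p.2, e ∈ (Wr.walk p.1 p.2 h).edges}.ncard ≤ 2 * k)

/-- The vertices of the image of a wiring. -/
def imageVerts (Wr : Wiring G H) : Set W :=
  Set.range Wr.toFun ∪ {w : W | ∃ (u v : V) (h : G.Adj u v), w ∈ (Wr.walk u v h).support}

/-- The volume of a wiring: the number of vertices of its image. -/
noncomputable def volume (Wr : Wiring G H) : ℕ := Wr.imageVerts.ncard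

/-- The image of a wiring, as a subgraph of the target. -/
def imageSubgraph (Wr : Wiring G H) : H.Subgraph where
  verts := Wr.imageVerts
  Adj w w' := ∃ (u v : V) (h : G.Adj u v), (Wr.walk u v h).toSubgraph.Adj w w'
  adj_sub := by
    rintro a b ⟨u, v, h, ha⟩
    exact (Wr.walk u v h).toSubgraph.adj_sub ha
  edge_vert := by
    rintro a b ⟨u, v, h, ha⟩
    refine Or.inr ⟨u, v, h, ?_⟩
    have := (Wr.walk u v h).toSubgraph.edge_vert ha
    rwa [SimpleGraph.Walk.verts_toSubgraph] at this
  symm := ⟨by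
    rintro a b ⟨u, v, h, ha⟩
    exact ⟨u, v, h, ha.symm⟩⟩

end Wiring

/-- `wir k G H` : the minimal volume of a coarse `k`-wiring of `G` into `H`
(`⊤` if there is none). -/
noncomputable def wir {V : Type*} {W : Type*} (k : ℕ)
    (G : SimpleGraph V) (H : SimpleGraph W) : ℕ∞ :=
  sInf {N : ℕ∞ | ∃ Wr : Wiring G H, Wr.IsCoarse k ∧ N = (Wr.volume : ℕ∞)}

/-- The `k`-wiring profile of `X` into `H`. -/
noncomputable def wirProfile {V : Type*} {W : Type*}
    (X : SimpleGraph V) (H : SimpleGraph W) (k n : ℕ) : ℕ∞ :=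
  sSup {N : ℕ∞ | ∃ Γ : X.Subgraph, Γ.verts.Finite ∧ Γ.verts.ncard ≤ n ∧ N = wir k Γ.coe H}

/-- One-directional adjacency generating the 2-dimensional integer grid. -/
def gridStep (p q : ℤ × ℤ) : Prop :=
  (p.1 = q.1 ∧ q.2 = p.2 + 1) ∨ (p.2 = q.2 ∧ q.1 = p.1 + 1)

/-- The 2-dimensional integer grid: vertices `ℤ²`, edges between points at distance 1. -/
def grid : SimpleGraph (ℤ × ℤ) where
  Adj p q := p ≠ q ∧ (gridStep p q ∨ gridStep q p)
  symm := ⟨fun p q h => ⟨h.1.symm, h.2.symm⟩⟩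
  loopless := ⟨fun p h => h.1 rfl⟩

/-- One-directional adjacency for the column graphs: vertical steps everywhere,
horizontal steps at heights divisible by `t`. -/
def colStep (t : ℕ) (p q : ℕ × ℕ) : Prop :=
  (p.1 = q.1 ∧ q.2 = p.2 + 1) ∨ (p.2 = q.2 ∧ t ∣ p.2 ∧ q.1 = p.1 + 1)

/-- Vertices of `X_n`. -/
def XVert (f : ℕ → ℕ) (n : ℕ) : Type :=
  {p : ℕ × ℕ // p.1 < f n ∧ p.2 ≤ 2 ^ 2 ^ (2 * n) * f n}

/-- The graph `X_n`. -/
def Xgraph (f : ℕ → ℕ) (n : ℕ) : SimpleGraph (XVert f n) where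
  Adj u v := u ≠ v ∧ (colStep (2 ^ 2 ^ (2 * n)) u.val v.val ∨ colStep (2 ^ 2 ^ (2 * n)) v.val u.val)
  symm := ⟨fun u v h => ⟨h.1.symm, h.2.symm⟩⟩
  loopless := ⟨fun u h => h.1 rfl⟩

/-- Vertices of `Y_n`. -/
def YVert (f : ℕ → ℕ) (n : ℕ) : Type :=
  {p : ℕ × ℕ // p.1 < f n ∧ p.2 ≤ 2 ^ 2 ^ (2 * n + 1) * f n}

/-- The graph `Y_n`. -/
def Ygraph (f : ℕ → ℕ) (n : ℕ) : SimpleGraph (YVert f n) where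
  Adj u v := u ≠ v ∧
    (colStep (2 ^ 2 ^ (2 * n + 1)) u.val v.val ∨ colStep (2 ^ 2 ^ (2 * n + 1)) v.val u.val)
  symm := ⟨fun u v h => ⟨h.1.symm, h.2.symm⟩⟩
  loopless := ⟨fun u h => h.1 rfl⟩

/-- Vertices of `X = ⨆ (n ≥ 1) X_n`: triples `(n, i, j)` with `(i,j)` a vertex of `X_n`. -/
def XTVert (f : ℕ → ℕ) : Type :=
  {p : ℕ × ℕ × ℕ // 1 ≤ p.1 ∧ p.2.1 < f p.1 ∧ p.2.2 ≤ 2 ^ 2 ^ (2 * p.1) * f p.1}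

/-- The graph `X`, the disjoint union of the `X_n` for `n ≥ 1`. -/
def Xtotal (f : ℕ → ℕ) : SimpleGraph (XTVert f) where
  Adj u v := u ≠ v ∧ u.val.1 = v.val.1 ∧
    (colStep (2 ^ 2 ^ (2 * u.val.1)) u.val.2 v.val.2 ∨
     colStep (2 ^ 2 ^ (2 * u.val.1)) v.val.2 u.val.2)
  symm := ⟨fun u v h => ⟨h.1.symm, h.2.1.symm, by rw [← h.2.1]; exact h.2.2.symm⟩⟩
  loopless := ⟨fun u h => h.1 rfl⟩

/-- Vertices of `Y = ⨆ (n ≥ 1) Y_n`. -/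
def YTVert (f : ℕ → ℕ) : Type :=
  {p : ℕ × ℕ × ℕ // 1 ≤ p.1 ∧ p.2.1 < f p.1 ∧ p.2.2 ≤ 2 ^ 2 ^ (2 * p.1 + 1) * f p.1}

/-- The graph `Y`, the disjoint union of the `Y_n` for `n ≥ 1`. -/
def Ytotal (f : ℕ → ℕ) : SimpleGraph (YTVert f) where
  Adj u v := u ≠ v ∧ u.val.1 = v.val.1 ∧
    (colStep (2 ^ 2 ^ (2 * u.val.1 + 1)) u.val.2 v.val.2 ∨
     colStep (2 ^ 2 ^ (2 * u.val.1 + 1)) v.val.2 u.val.2)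
  symm := ⟨fun u v h => ⟨h.1.symm, h.2.1.symm, by rw [← h.2.1]; exact h.2.2.symm⟩⟩
  loopless := ⟨fun u h => h.1 rfl⟩

section Aux

variable (f : ℕ → ℕ) (n : ℕ)

lemma hMT : 2 ^ 2 ^ (2 * n) * f n ≤ 2 ^ 2 ^ (2 * n + 1) * f n :=
  Nat.mul_le_mul_right _ (Nat.pow_le_pow_right (by norm_num)
    (Nat.pow_le_pow_right (by norm_num) (by omega)))

/-- The projection map on vertices. -/
def projFun (hpos : 0 < f n) (v : XVert f n) : YVert f n :=
  ⟨(0, v.val.2), hpos, le_trans v.prop.2 (hMT f n)⟩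

lemma adj_key {u v : XVert f n} (h : (Xgraph f n).Adj u v) :
    (u.val.1 = v.val.1 ∧ (v.val.2 = u.val.2 + 1 ∨ u.val.2 = v.val.2 + 1)) ∨
      u.val.2 = v.val.2 := by
  have h : u ≠ v ∧ (colStep (2 ^ 2 ^ (2 * n)) u.val v.val ∨ colStep (2 ^ 2 ^ (2 * n)) v.val u.val) := h
  obtain ⟨-, h2 | h2⟩ := h <;> rcases h2 with h2 | h2
  · exact Or.inl ⟨h2.1, Or.inl h2.2⟩
  · exact Or.inr h2.1
  · exact Or.inl ⟨h2.1.symm, Or.inr h2.2⟩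
  · exact Or.inr h2.1.symm

lemma projAdj (hpos : 0 < f n) {u v : XVert f n} (h : (Xgraph f n).Adj u v)
    (hj : u.val.2 ≠ v.val.2) :
    (Ygraph f n).Adj (projFun f n hpos u) (projFun f n hpos v) := by
  rcases adj_key f n h with ⟨h1, h2⟩ | h2
  · show _ ≠ _ ∧ _
    refine ⟨fun e => hj (congrArg (fun w => w.val.2) e), ?_⟩
    rcases h2 with h2 | h2
    · exact Or.inl (Or.inl ⟨rfl, h2⟩)
    · exact Or.inr (Or.inl ⟨rfl, h2⟩)
  · exact absurd h2 hj

lemma projFun_eq (hpos : 0 < f n) {u v : XVert f n} (hj : u.val.2 = v.val.2) :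
    projFun f n hpos u = projFun f n hpos v :=
  Subtype.ext (by simp only [projFun]; rw [hj])

/-- The chosen walks. -/
def projWalk (hpos : 0 < f n) (u v : XVert f n) (h : (Xgraph f n).Adj u v) :
    (Ygraph f n).Walk (projFun f n hpos u) (projFun f n hpos v) :=
  if hj : u.val.2 = v.val.2 then
    (SimpleGraph.Walk.nil : (Ygraph f n).Walk (projFun f n hpos u) _).copy rfl
      (projFun_eq f n hpos hj)
  else (projAdj f n hpos h hj).toWalk

lemma nil_copy_reverse {W : Type*} {H : SimpleGraph W} {a b : W} (e : a = b) :
    ((SimpleGraph.Walk.nil : H.Walk a a).copy rfl e).reverse =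
      (SimpleGraph.Walk.nil : H.Walk b b).copy rfl e.symm := by
  subst e; rfl

lemma projWalk_symm (hpos : 0 < f n) (u v : XVert f n) (h : (Xgraph f n).Adj u v) :
    projWalk f n hpos v u ((Xgraph f n).adj_symm h) = (projWalk f n hpos u v h).reverse := by
  by_cases hj : u.val.2 = v.val.2
  · rw [projWalk, projWalk, dif_pos hj, dif_pos hj.symm,
      nil_copy_reverse (projFun_eq f n hpos hj)]
  · rw [projWalk, projWalk, dif_neg hj, dif_neg (fun e => hj e.symm)]
    rfl

lemma projWalk_edges_eq (hpos : 0 < f n) (u v : XVert f n) (h : (Xgraph f n).Adj u v)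
    (hj : u.val.2 = v.val.2) : (projWalk f n hpos u v h).edges = [] := by
  rw [projWalk, dif_pos hj]; simp

lemma projWalk_edges_ne (hpos : 0 < f n) (u v : XVert f n) (h : (Xgraph f n).Adj u v)
    (hj : u.val.2 ≠ v.val.2) :
    (projWalk f n hpos u v h).edges = [s(projFun f n hpos u, projFun f n hpos v)] := by
  rw [projWalk, dif_neg hj]; rfl

lemma projWalk_support (hpos : 0 < f n) (u v : XVert f n) (h : (Xgraph f n).Adj u v) :
    ∀ w ∈ (projWalk f n hpos u v h).support,
      w = projFun f n hpos u ∨ w = projFun f n hpos v := by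
  intro w hw
  by_cases hj : u.val.2 = v.val.2
  · rw [projWalk, dif_pos hj] at hw
    simp only [SimpleGraph.Walk.support_copy, SimpleGraph.Walk.support_nil,
      List.mem_singleton] at hw
    exact Or.inl hw
  · rw [projWalk, dif_neg hj] at hw
    simp only [SimpleGraph.Adj.toWalk, SimpleGraph.Walk.support_cons,
      SimpleGraph.Walk.support_nil, List.mem_cons, List.mem_singleton,
      List.not_mem_nil, or_false] at hw
    exact hw

lemma ncard_Iio (m : ℕ) : (Set.Iio m).ncard = m := by
  rw [← Finset.coe_range, Set.ncard_coe_finset, Finset.card_range]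

end Aux

/-- For `n ≥ 1`, the vertical projection `(i, j) ↦ (0, j)` — sending
each vertical edge `(i,j)-(i,j+1)` of `X_n` to the edge `(0,j)-(0,j+1)` of `Y_n` and
collapsing each horizontal edge to a vertex — is a coarse `f n`-wiring of `X_n` into
`Y_n` of volume exactly `2^(2^(2n)) · f n + 1`. -/
theorem statement11
    (f : ℕ → ℕ)
    (hsurj : ∀ k, 1 ≤ k → ∃ n, 1 ≤ n ∧ f n = k)
    (hf1 : f 1 = 1)
    (hf : ∀ n, 2 ≤ n → 2 ≤ f n ∧ f n ≤ n)
    (hinf : ∀ k, 2 ≤ k → {n | f n = k}.Infinite)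
    (n : ℕ) (hn : 1 ≤ n) :
    ∃ Wr : Wiring (Xgraph f n) (Ygraph f n),
      (∀ v : XVert f n, (Wr.toFun v).val = (0, v.val.2)) ∧
      (∀ (u v : XVert f n) (h : (Xgraph f n).Adj u v),
        (u.val.2 = v.val.2 → (Wr.walk u v h).edges = []) ∧
        (u.val.2 ≠ v.val.2 → (Wr.walk u v h).edges = [s(Wr.toFun u, Wr.toFun v)])) ∧
      Wr.IsCoarse (f n) ∧
      Wr.volume = 2 ^ 2 ^ (2 * n) * f n + 1 := by
  have hpos : 0 < f n := by
    rcases eq_or_lt_of_le hn with h | h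
    · rw [← h, hf1]; norm_num
    · have := (hf n h).1; omega
  set M : ℕ := 2 ^ 2 ^ (2 * n) * f n with hM
  refine ⟨⟨projFun f n hpos, projWalk f n hpos, projWalk_symm f n hpos⟩,
    fun v => rfl, fun u v h => ⟨projWalk_edges_eq f n hpos u v h,
      projWalk_edges_ne f n hpos u v h⟩, ⟨?_, ?_⟩, ?_⟩
  · -- vertex multiplicity
    intro w
    have h1 : {v : XVert f n | projFun f n hpos v = w}.ncard ≤ (Set.Iio (f n)).ncard := by
      apply Set.ncard_le_ncard_of_injOn (fun v : XVert f n => v.val.1)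
      · intro v _; exact v.prop.1
      · intro v hv v' hv' heq
        have h2 : v.val.2 = v'.val.2 := by
          have := (hv.trans hv'.symm)
          exact congrArg (fun w => w.val.2) this
        exact Subtype.ext (Prod.ext heq h2)
    rw [ncard_Iio] at h1
    exact h1
  · -- edge multiplicity
    intro e he
    have key : ∀ p : XVert f n × XVert f n,
        (∃ h : (Xgraph f n).Adj p.1 p.2, e ∈ (projWalk f n hpos p.1 p.2 h).edges) →
        p.1.val.1 = p.2.val.1 ∧ (p.2.val.2 = p.1.val.2 + 1 ∨ p.1.val.2 = p.2.val.2 + 1) ∧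
          e = s(projFun f n hpos p.1, projFun f n hpos p.2) := by
      rintro ⟨u, v⟩ ⟨h, hmem⟩
      by_cases hj : u.val.2 = v.val.2
      · rw [projWalk_edges_eq f n hpos u v h hj] at hmem
        simp at hmem
      · rw [projWalk_edges_ne f n hpos u v h hj] at hmem
        have he2 : e = s(projFun f n hpos u, projFun f n hpos v) := by
          simpa using hmem
        rcases adj_key f n h with ⟨h1, h2⟩ | h2
        · exact ⟨h1, h2, he2⟩
        · exact absurd h2 hj
    have h1 : {p : XVert f n × XVert f n |
        ∃ h : (Xgraph f n).Adj p.1 p.2, e ∈ (projWalk f n hpos p.1 p.2 h).edges}.ncard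
        ≤ (Set.Iio (2 * f n)).ncard := by
      apply Set.ncard_le_ncard_of_injOn
        (fun p : XVert f n × XVert f n =>
          p.1.val.1 + f n * (if p.1.val.2 ≤ p.2.val.2 then 0 else 1))
      · intro p _
        have := p.1.prop.1
        simp only [Set.mem_Iio]
        split_ifs <;> omega
      · intro p hp q hq hF
        obtain ⟨k1, k2, k3⟩ := key p hp
        obtain ⟨l1, l2, l3⟩ := key q hq
        have hcd : (p.1.val.2 = q.1.val.2 ∧ p.2.val.2 = q.2.val.2) ∨
            (p.1.val.2 = q.2.val.2 ∧ p.2.val.2 = q.1.val.2) := by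
          have hs := k3.symm.trans l3
          rw [Sym2.eq_iff] at hs
          rcases hs with ⟨ha, hb⟩ | ⟨ha, hb⟩
          · exact Or.inl ⟨congrArg (fun w => w.val.2) ha, congrArg (fun w => w.val.2) hb⟩
          · exact Or.inr ⟨congrArg (fun w => w.val.2) ha, congrArg (fun w => w.val.2) hb⟩
        have hp1 : p.1.val.1 < f n := p.1.prop.1
        have hq1 : q.1.val.1 < f n := q.1.prop.1
        simp only at hF
        have hmain : p.1.val.1 = q.1.val.1 ∧ p.1.val.2 = q.1.val.2 ∧
            p.2.val.2 = q.2.val.2 := by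
          split_ifs at hF <;> omega
        refine Prod.ext (Subtype.ext (Prod.ext hmain.1 hmain.2.1))
          (Subtype.ext (Prod.ext (by omega) hmain.2.2))
    rw [ncard_Iio] at h1
    exact h1
  · -- volume
    show (Wiring.mk (projFun f n hpos) (projWalk f n hpos)
      (projWalk_symm f n hpos)).imageVerts.ncard = M + 1
    have hMle : M ≤ 2 ^ 2 ^ (2 * n + 1) * f n := hMT f n
    set g : ℕ → YVert f n :=
      fun j => ⟨(0, min j M), hpos, le_trans (min_le_right _ _) hMle⟩ with hg
    have himg : (Wiring.mk (projFun f n hpos) (projWalk f n hpos)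
        (projWalk_symm f n hpos)).imageVerts = g '' Set.Iio (M + 1) := by
      ext w
      constructor
      · intro hw
        have hrange : ∀ v : XVert f n, projFun f n hpos v ∈ g '' Set.Iio (M + 1) := by
          intro v
          refine ⟨v.val.2, Nat.lt_succ_of_le v.prop.2, ?_⟩
          exact Subtype.ext (by simp [hg, projFun, min_eq_left (show v.val.2 ≤ M from v.prop.2)])
        rcases hw with ⟨v, rfl⟩ | ⟨u, v, h, hw⟩
        · exact hrange v
        · rcases projWalk_support f n hpos u v h w hw with rfl | rfl
          · exact hrange u
          · exact hrange v
      · rintro ⟨j, hj, rfl⟩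
        left
        refine ⟨⟨(0, j), hpos, Nat.lt_succ_iff.mp hj⟩, ?_⟩
        exact Subtype.ext (by simp [hg, projFun, min_eq_left (Nat.lt_succ_iff.mp hj)])
    rw [himg, Set.ncard_image_of_injOn, ncard_Iio]
    intro j hj j' hj' heq
    have h2 : min j M = min j' M := congrArg (fun w => w.val.2) heq
    rw [min_eq_left (Nat.lt_succ_iff.mp hj), min_eq_left (Nat.lt_succ_iff.mp hj')] at h2
    exact h2
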